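/- For each N, define the truncation errors R^{n+1}_{Δt} = v(t_n) − S(Δt)(v(t_{n+1}) − Δt·G(t_{n+1}, v(t_{n+1}))) for n = 0, …, N−1. Then the scheme is consistent: ∑_{n=0}^{N−1} ‖R^{n+1}_{Δt}‖ → 0 as N → ∞. -/

import Mathlib

open MeasureTheory Filter intervalIntegral

theorem explicit_scheme_consistency_aux
    {E : Type*} [NormedAddCommGroup E] [NormedSpace ℝ E] [CompleteSpace E]
    (T : ℝ) (hT : 0 < T)
    (S : ℝ → (E →L[ℝ] E))
    (hS0 : S 0 = ContinuousLinearMap.id ℝ _)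
    (hSadd : ∀ s t : ℝ, 0 ≤ s → 0 ≤ t → S (t + s) = (S t).comp (S s))
    (hScont : ∀ f : E, Tendsto (fun t : ℝ => S t f) (nhdsWithin 0 (Set.Ioi 0)) (nhds f))
    (M : ℝ) (hM : 1 ≤ M) (hSM : ∀ t ∈ Set.Icc (0:ℝ) T, ‖S t‖ ≤ M)
    (L : ℝ) (hL : 0 < L)
    (G : ℝ → E → E)
    (hG : ∀ t₁ ∈ Set.Icc (0:ℝ) T, ∀ t₂ ∈ Set.Icc (0:ℝ) T, ∀ u w : E,
        ‖G t₁ u - G t₂ w‖ ≤ L * (|t₁ - t₂| + ‖u - w‖))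
    (v : ℝ → E)
    (hv_cont : ContinuousOn v (Set.Icc 0 T))
    (hv_mild : ∀ s t : ℝ, 0 ≤ s → s ≤ t → t ≤ T →
      v s = S (t - s) (v t) - ∫ τ in s..t, S (τ - s) (G τ (v τ))) :
    Tendsto (fun N : ℕ => ∑ n ∈ Finset.range N,
      ‖v ((n : ℝ) * (T / N)) -
        S (T / N) (v (((n : ℝ) + 1) * (T / N)) -
          (T / N) • G (((n : ℝ) + 1) * (T / N)) (v (((n : ℝ) + 1) * (T / N))))‖)
      atTop (nhds 0) := by
  have hT' : (0:ℝ) ≤ T := hT.le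
  have hM0 : (0:ℝ) ≤ M := le_trans zero_le_one hM
  -- continuity of τ ↦ G τ (v τ) on [0,T]
  have h_cont : ContinuousOn (fun τ => G τ (v τ)) (Set.Icc 0 T) := by
    intro τ₀ hτ₀
    rw [ContinuousWithinAt, tendsto_iff_norm_sub_tendsto_zero]
    apply squeeze_zero' (g := fun τ => L * (|τ - τ₀| + ‖v τ - v τ₀‖))
    · exact Eventually.of_forall fun τ => norm_nonneg _
    · filter_upwards [self_mem_nhdsWithin] with τ hτ
      exact hG τ hτ τ₀ hτ₀ (v τ) (v τ₀)
    · have h1 : Tendsto (fun τ : ℝ => |τ - τ₀|) (nhdsWithin τ₀ (Set.Icc 0 T)) (nhds 0) := by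
        have hc : Continuous (fun τ : ℝ => |τ - τ₀|) := (continuous_id.sub continuous_const).abs
        have := hc.tendsto τ₀
        simp only [sub_self, abs_zero] at this
        exact this.mono_left nhdsWithin_le_nhds
      have h2 : Tendsto (fun τ => ‖v τ - v τ₀‖) (nhdsWithin τ₀ (Set.Icc 0 T)) (nhds 0) := by
        have := hv_cont τ₀ hτ₀
        rw [ContinuousWithinAt, tendsto_iff_norm_sub_tendsto_zero] at this
        exact this
      have := (h1.add h2).const_mul L
      simpa using this
  -- strong continuity of the semigroup on [0,T]
  have Skey : ∀ f : E, ∀ a ∈ Set.Icc (0:ℝ) T, ∀ b ∈ Set.Icc (0:ℝ) T,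
      ‖S b f - S a f‖ ≤ M * ‖S |b - a| f - f‖ := by
    have key : ∀ f : E, ∀ a ∈ Set.Icc (0:ℝ) T, ∀ b ∈ Set.Icc (0:ℝ) T, a ≤ b →
        ‖S b f - S a f‖ ≤ M * ‖S (b - a) f - f‖ := by
      intro f a ha b hb hab
      have hcomp : S b = (S a).comp (S (b - a)) := by
        have := hSadd (b - a) a (by linarith) ha.1
        rwa [show a + (b - a) = b by ring] at this
      have heq : S b f - S a f = S a (S (b - a) f - f) := by
        rw [hcomp, map_sub]; rfl
      rw [heq]
      calc ‖S a (S (b - a) f - f)‖ ≤ ‖S a‖ * ‖S (b - a) f - f‖ := (S a).le_opNorm _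
        _ ≤ M * ‖S (b - a) f - f‖ :=
            mul_le_mul_of_nonneg_right (hSM a ha) (norm_nonneg _)
    intro f a ha b hb
    rcases le_total a b with hab | hab
    · rw [abs_of_nonneg (by linarith)]; exact key f a ha b hb hab
    · rw [abs_of_nonpos (by linarith), neg_sub, ← norm_neg, neg_sub]
      exact key f b hb a ha hab
  have Scont : ∀ f : E, ContinuousOn (fun σ => S σ f) (Set.Icc 0 T) := by
    intro f σ₀ hσ₀
    rw [ContinuousWithinAt, tendsto_iff_norm_sub_tendsto_zero]
    apply squeeze_zero' (g := fun σ => M * ‖S |σ - σ₀| f - f‖)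
    · exact Eventually.of_forall fun σ => norm_nonneg _
    · filter_upwards [self_mem_nhdsWithin] with σ hσ
      exact Skey f σ₀ hσ₀ σ hσ
    · have hψ : Tendsto (fun t => ‖S t f - f‖) (nhdsWithin 0 (Set.Ici (0:ℝ))) (nhds 0) := by
        have h1 : Tendsto (fun t => ‖S t f - f‖) (nhdsWithin 0 (Set.Ioi (0:ℝ))) (nhds 0) := by
          have := hScont f
          rw [tendsto_iff_norm_sub_tendsto_zero] at this
          exact this
        have h2 : Tendsto (fun t => ‖S t f - f‖) (pure (0:ℝ)) (nhds 0) := by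
          have h0 : ‖S (0:ℝ) f - f‖ = 0 := by simp [hS0]
          have := tendsto_pure_nhds (fun t : ℝ => ‖S t f - f‖) 0
          rwa [h0] at this
        rw [← Set.Ioi_insert, nhdsWithin_insert]
        exact tendsto_sup.mpr ⟨h2, h1⟩
      have habs : Tendsto (fun σ : ℝ => |σ - σ₀|) (nhdsWithin σ₀ (Set.Icc 0 T))
          (nhdsWithin 0 (Set.Ici (0:ℝ))) := by
        rw [tendsto_nhdsWithin_iff]
        constructor
        · have hc : Continuous (fun σ : ℝ => |σ - σ₀|) := (continuous_id.sub continuous_const).abs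
          have := hc.tendsto σ₀
          simp only [sub_self, abs_zero] at this
          exact this.mono_left nhdsWithin_le_nhds
        · exact Eventually.of_forall fun σ => Set.mem_Ici.mpr (abs_nonneg _)
      have := (hψ.comp habs).const_mul M
      simpa using this
  -- joint continuity of Φ on the compact square
  have Φ_cont : ContinuousOn (fun p : ℝ × ℝ => S p.1 (G p.2 (v p.2)))
      (Set.Icc 0 T ×ˢ Set.Icc 0 T) := by
    rintro ⟨σ₀, τ₀⟩ hp
    obtain ⟨hσ₀, hτ₀⟩ := Set.mem_prod.mp hp
    rw [ContinuousWithinAt, tendsto_iff_norm_sub_tendsto_zero]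
    apply squeeze_zero' (g := fun p : ℝ × ℝ =>
      M * ‖G p.2 (v p.2) - G τ₀ (v τ₀)‖ + ‖S p.1 (G τ₀ (v τ₀)) - S σ₀ (G τ₀ (v τ₀))‖)
    · exact Eventually.of_forall fun p => norm_nonneg _
    · filter_upwards [self_mem_nhdsWithin] with p hpK
      obtain ⟨hp1, hp2⟩ := Set.mem_prod.mp hpK
      have heq : S p.1 (G p.2 (v p.2)) - S σ₀ (G τ₀ (v τ₀))
          = S p.1 (G p.2 (v p.2) - G τ₀ (v τ₀))
            + (S p.1 (G τ₀ (v τ₀)) - S σ₀ (G τ₀ (v τ₀))) := by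
        rw [map_sub]; abel
      rw [heq]
      have hle : ‖S p.1 (G p.2 (v p.2) - G τ₀ (v τ₀))‖ ≤ M * ‖G p.2 (v p.2) - G τ₀ (v τ₀)‖ :=
        calc ‖S p.1 (G p.2 (v p.2) - G τ₀ (v τ₀))‖
            ≤ ‖S p.1‖ * ‖G p.2 (v p.2) - G τ₀ (v τ₀)‖ := (S p.1).le_opNorm _
          _ ≤ M * ‖G p.2 (v p.2) - G τ₀ (v τ₀)‖ :=
              mul_le_mul_of_nonneg_right (hSM p.1 hp1) (norm_nonneg _)
      exact le_trans (norm_add_le _ _) (add_le_add_left hle _)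
    · have hsnd : Tendsto (fun p : ℝ × ℝ => p.2)
          (nhdsWithin (σ₀, τ₀) (Set.Icc 0 T ×ˢ Set.Icc 0 T))
          (nhdsWithin τ₀ (Set.Icc 0 T)) := by
        rw [tendsto_nhdsWithin_iff]
        refine ⟨continuous_snd.continuousAt.mono_left nhdsWithin_le_nhds, ?_⟩
        filter_upwards [self_mem_nhdsWithin] with p hpK
        exact (Set.mem_prod.mp hpK).2
      have hfst : Tendsto (fun p : ℝ × ℝ => p.1)
          (nhdsWithin (σ₀, τ₀) (Set.Icc 0 T ×ˢ Set.Icc 0 T))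
          (nhdsWithin σ₀ (Set.Icc 0 T)) := by
        rw [tendsto_nhdsWithin_iff]
        refine ⟨continuous_fst.continuousAt.mono_left nhdsWithin_le_nhds, ?_⟩
        filter_upwards [self_mem_nhdsWithin] with p hpK
        exact (Set.mem_prod.mp hpK).1
      have h1 : Tendsto (fun p : ℝ × ℝ => ‖G p.2 (v p.2) - G τ₀ (v τ₀)‖)
          (nhdsWithin (σ₀, τ₀) (Set.Icc 0 T ×ˢ Set.Icc 0 T)) (nhds 0) := by
        have := h_cont τ₀ hτ₀
        rw [ContinuousWithinAt, tendsto_iff_norm_sub_tendsto_zero] at this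
        exact this.comp hsnd
      have h2 : Tendsto (fun p : ℝ × ℝ => ‖S p.1 (G τ₀ (v τ₀)) - S σ₀ (G τ₀ (v τ₀))‖)
          (nhdsWithin (σ₀, τ₀) (Set.Icc 0 T ×ˢ Set.Icc 0 T)) (nhds 0) := by
        have := Scont (G τ₀ (v τ₀)) σ₀ hσ₀
        rw [ContinuousWithinAt, tendsto_iff_norm_sub_tendsto_zero] at this
        exact this.comp hfst
      have := (h1.const_mul M).add h2
      simpa using this
  -- uniform continuity on the compact square
  have hKc : IsCompact (Set.Icc (0:ℝ) T ×ˢ Set.Icc (0:ℝ) T) := isCompact_Icc.prod isCompact_Icc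
  have hu := hKc.uniformContinuousOn_of_continuous Φ_cont
  rw [Metric.uniformContinuousOn_iff] at hu
  -- the main estimate
  rw [Metric.tendsto_atTop]
  intro ε hε
  have hε'pos : 0 < ε / (2 * (T + 1)) := by positivity
  obtain ⟨δ, hδ, hδ'⟩ := hu (ε / (2 * (T + 1))) hε'pos
  obtain ⟨N₁, hN₁⟩ := exists_nat_gt (T / δ)
  refine ⟨N₁ + 1, fun N hN => ?_⟩
  have hN1 : 1 ≤ N := le_trans (Nat.le_add_left 1 N₁) hN
  have hNpos : (0:ℝ) < N := by exact_mod_cast Nat.lt_of_lt_of_le Nat.zero_lt_one hN1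
  have hΔpos : 0 < T / (N:ℝ) := div_pos hT hNpos
  have hΔδ : T / (N:ℝ) < δ := by
    rw [div_lt_iff₀ hNpos]
    have hlt : T / δ < (N:ℝ) := lt_of_lt_of_le hN₁ (by exact_mod_cast Nat.le_of_succ_le hN)
    calc T = (T / δ) * δ := by field_simp
      _ < (N:ℝ) * δ := mul_lt_mul_of_pos_right hlt hδ
      _ = δ * N := by ring
  have hNΔ : (N:ℝ) * (T / (N:ℝ)) = T := by field_simp
  have hΔT : T / (N:ℝ) ≤ T := by
    nlinarith [mul_le_mul_of_nonneg_right (show (1:ℝ) ≤ N by exact_mod_cast hN1) hΔpos.le]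
  -- bound each truncation error
  have hterm : ∀ n ∈ Finset.range N,
      ‖v ((n:ℝ) * (T / (N:ℝ))) - S (T / (N:ℝ)) (v (((n:ℝ)+1) * (T / (N:ℝ))) -
        (T / (N:ℝ)) • G (((n:ℝ)+1) * (T / (N:ℝ))) (v (((n:ℝ)+1) * (T / (N:ℝ)))))‖
        ≤ (ε / (2 * (T + 1))) * (T / (N:ℝ)) := by
    intro n hn
    have hnN : (n:ℝ) + 1 ≤ (N:ℝ) := by
      exact_mod_cast Nat.succ_le_of_lt (Finset.mem_range.mp hn)
    set Δ := T / (N:ℝ) with hΔdef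
    set a := (n:ℝ) * Δ with ha
    set b := ((n:ℝ) + 1) * Δ with hb
    have hn0 : (0:ℝ) ≤ (n:ℝ) := Nat.cast_nonneg n
    have ha0 : 0 ≤ a := mul_nonneg hn0 hΔpos.le
    have hab : a ≤ b := by
      apply mul_le_mul_of_nonneg_right _ hΔpos.le; linarith
    have hbT : b ≤ T := by
      calc b ≤ (N:ℝ) * Δ := mul_le_mul_of_nonneg_right hnN hΔpos.le
        _ = T := hNΔ
    have hba : b - a = Δ := by rw [ha, hb]; ring
    have hb0 : 0 ≤ b := le_trans ha0 hab
    have hΔIcc : Δ ∈ Set.Icc (0:ℝ) T := ⟨hΔpos.le, hΔT⟩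
    -- integrability
    have hgint : IntervalIntegrable (fun τ => S (τ - a) (G τ (v τ))) volume a b := by
      apply ContinuousOn.intervalIntegrable
      rw [Set.uIcc_of_le hab]
      have heq : (fun τ => S (τ - a) (G τ (v τ)))
          = (fun p : ℝ × ℝ => S p.1 (G p.2 (v p.2))) ∘ (fun τ : ℝ => (τ - a, τ)) := rfl
      rw [heq]
      apply Φ_cont.comp
      · exact Continuous.continuousOn (by fun_prop)
      · intro τ hτ
        have hτab : τ - a ≤ Δ := by rw [← hba]; linarith [hτ.2]
        show ((τ - a, τ) : ℝ × ℝ) ∈ Set.Icc (0:ℝ) T ×ˢ Set.Icc (0:ℝ) T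
        exact Set.mk_mem_prod ⟨by linarith [hτ.1], by linarith⟩
          ⟨by linarith [hτ.1], by linarith [hτ.2]⟩
    have hmild := hv_mild a b ha0 hab hbT
    have hrw : v a - S Δ (v b - Δ • G b (v b))
        = ∫ τ in a..b, (S Δ (G b (v b)) - S (τ - a) (G τ (v τ))) := by
      rw [intervalIntegral.integral_sub intervalIntegrable_const hgint,
        intervalIntegral.integral_const, hba, hmild, hba, map_sub, _root_.map_smul]
      abel
    rw [hrw]
    have hbound : ∀ τ ∈ Set.uIoc a b,
        ‖S Δ (G b (v b)) - S (τ - a) (G τ (v τ))‖ ≤ ε / (2 * (T + 1)) := by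
      intro τ hτ
      rw [Set.uIoc_of_le hab] at hτ
      have hτa : a < τ := hτ.1
      have hτb : τ ≤ b := hτ.2
      have hτab : τ - a ≤ Δ := by rw [← hba]; linarith
      have hx : ((Δ, b) : ℝ × ℝ) ∈ Set.Icc (0:ℝ) T ×ˢ Set.Icc (0:ℝ) T :=
        Set.mk_mem_prod hΔIcc ⟨hb0, hbT⟩
      have hy : ((τ - a, τ) : ℝ × ℝ) ∈ Set.Icc (0:ℝ) T ×ˢ Set.Icc (0:ℝ) T :=
        Set.mk_mem_prod ⟨by linarith, by linarith⟩ ⟨by linarith, by linarith⟩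
      have hdist : dist ((Δ, b) : ℝ × ℝ) ((τ - a, τ)) < δ := by
        rw [Prod.dist_eq]
        dsimp only
        apply max_lt
        · rw [Real.dist_eq, abs_of_nonneg (by linarith)]
          linarith
        · rw [Real.dist_eq, abs_of_nonneg (by linarith)]
          have : b - τ < Δ := by rw [← hba]; linarith
          linarith
      have := hδ' _ hx _ hy hdist
      rw [dist_eq_norm] at this
      exact le_of_lt this
    calc ‖∫ τ in a..b, (S Δ (G b (v b)) - S (τ - a) (G τ (v τ)))‖
        ≤ (ε / (2 * (T + 1))) * |b - a| :=
          intervalIntegral.norm_integral_le_of_norm_le_const hbound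
      _ = (ε / (2 * (T + 1))) * Δ := by rw [hba, abs_of_pos hΔpos]
  -- sum up
  have hsum : ∑ n ∈ Finset.range N,
      ‖v ((n:ℝ) * (T / (N:ℝ))) - S (T / (N:ℝ)) (v (((n:ℝ)+1) * (T / (N:ℝ))) -
        (T / (N:ℝ)) • G (((n:ℝ)+1) * (T / (N:ℝ))) (v (((n:ℝ)+1) * (T / (N:ℝ)))))‖
      ≤ (ε / (2 * (T + 1))) * T := by
    calc ∑ n ∈ Finset.range N,
        ‖v ((n:ℝ) * (T / (N:ℝ))) - S (T / (N:ℝ)) (v (((n:ℝ)+1) * (T / (N:ℝ))) -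
          (T / (N:ℝ)) • G (((n:ℝ)+1) * (T / (N:ℝ))) (v (((n:ℝ)+1) * (T / (N:ℝ)))))‖
        ≤ ∑ _n ∈ Finset.range N, (ε / (2 * (T + 1))) * (T / (N:ℝ)) :=
          Finset.sum_le_sum hterm
      _ = (N:ℝ) * ((ε / (2 * (T + 1))) * (T / (N:ℝ))) := by
          rw [Finset.sum_const, Finset.card_range, nsmul_eq_mul]
      _ = (ε / (2 * (T + 1))) * ((N:ℝ) * (T / (N:ℝ))) := by ring
      _ = (ε / (2 * (T + 1))) * T := by rw [hNΔ]
  have hfin : (ε / (2 * (T + 1))) * T < ε := by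
    rw [div_mul_eq_mul_div, div_lt_iff₀ (by nlinarith : (0:ℝ) < 2 * (T + 1))]
    nlinarith
  rw [Real.dist_eq, sub_zero,
    abs_of_nonneg (Finset.sum_nonneg fun n _ => norm_nonneg _)]
  exact lt_of_le_of_lt hsum hfin

/-- Consistency of the semi-discrete explicit scheme. -/
theorem explicit_scheme_consistency
    (d : ℕ) (hd : 1 ≤ d) (T : ℝ) (hT : 0 < T)
    (S : ℝ → (Lp ℝ 2 (volume : Measure (Fin d → ℝ)) →L[ℝ]
              Lp ℝ 2 (volume : Measure (Fin d → ℝ))))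
    (hS0 : S 0 = ContinuousLinearMap.id ℝ _)
    (hSadd : ∀ s t : ℝ, 0 ≤ s → 0 ≤ t → S (t + s) = (S t).comp (S s))
    (hScont : ∀ f : Lp ℝ 2 (volume : Measure (Fin d → ℝ)),
      Tendsto (fun t : ℝ => S t f) (nhdsWithin 0 (Set.Ioi 0)) (nhds f))
    (M : ℝ) (hM : 1 ≤ M) (hSM : ∀ t ∈ Set.Icc (0:ℝ) T, ‖S t‖ ≤ M)
    (L : ℝ) (hL : 0 < L)
    (G : ℝ → Lp ℝ 2 (volume : Measure (Fin d → ℝ)) → Lp ℝ 2 (volume : Measure (Fin d → ℝ)))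
    (hG : ∀ t₁ ∈ Set.Icc (0:ℝ) T, ∀ t₂ ∈ Set.Icc (0:ℝ) T,
      ∀ u w : Lp ℝ 2 (volume : Measure (Fin d → ℝ)),
        ‖G t₁ u - G t₂ w‖ ≤ L * (|t₁ - t₂| + ‖u - w‖))
    (v : ℝ → Lp ℝ 2 (volume : Measure (Fin d → ℝ)))
    (hv_cont : ContinuousOn v (Set.Icc 0 T))
    (hv_mild : ∀ s t : ℝ, 0 ≤ s → s ≤ t → t ≤ T →
      v s = S (t - s) (v t) - ∫ τ in s..t, S (τ - s) (G τ (v τ)))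
    (φ : Lp ℝ 2 (volume : Measure (Fin d → ℝ))) (hφ : v T = φ) :
    Tendsto (fun N : ℕ => ∑ n ∈ Finset.range N,
      ‖v ((n : ℝ) * (T / N)) -
        S (T / N) (v (((n : ℝ) + 1) * (T / N)) -
          (T / N) • G (((n : ℝ) + 1) * (T / N)) (v (((n : ℝ) + 1) * (T / N))))‖)
      atTop (nhds 0) :=
  explicit_scheme_consistency_aux T hT S hS0 hSadd hScont M hM hSM L hL G hG v hv_cont hv_mild
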